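/- For all integers n, m ≥ 1 and every integer k with 0 ≤ k ≤ nm, the number of dominating sets of cardinality k of the n×m rook graph satisfies d_{n,m}(k) = C(nm, k) − Σ_{r=1}^{n} Σ_{c=1}^{m} C(n,r) C(m,c) E_{n−r,m−c}(k), where the identity is read in the integers. -/

import Mathlib

open Finset Polynomial

/-- The `n × m` rook graph: vertices are squares `(a,b)`; two distinct squares are
adjacent iff they share a row or a column. -/
def rookGraph (n m : ℕ) : SimpleGraph (Fin n × Fin m) where
  Adj v w := v ≠ w ∧ (v.1 = w.1 ∨ v.2 = w.2)
  symm := by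
    constructor
    rintro v w ⟨h1, h2⟩
    exact ⟨h1.symm, h2.imp Eq.symm Eq.symm⟩
  loopless := by
    constructor
    rintro v ⟨h1, _⟩
    exact h1 rfl

/-- `S` is a dominating set of the `n × m` rook graph. -/
def IsDomSet (n m : ℕ) (S : Finset (Fin n × Fin m)) : Prop :=
  ∀ v, v ∈ S ∨ ∃ u ∈ S, (rookGraph n m).Adj u v

/-- `domCount n m k` is the number of dominating sets of cardinality `k`
of the `n × m` rook graph. -/
noncomputable def domCount (n m k : ℕ) : ℕ :=
  Set.ncard {S : Finset (Fin n × Fin m) | S.card = k ∧ IsDomSet n m S}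

/-- `ECount n m k` is the number of `k`-element subsets of `{1,…,n} × {1,…,m}`
that meet every row and every column. -/
noncomputable def ECount (n m k : ℕ) : ℕ :=
  Set.ncard {T : Finset (Fin n × Fin m) | T.card = k ∧
    (∀ r : Fin n, ∃ c : Fin m, (r, c) ∈ T) ∧ (∀ c : Fin m, ∃ r : Fin n, (r, c) ∈ T)}

/-- The domination polynomial of the `n × m` rook graph, as a polynomial over `ℤ`. -/
noncomputable def domPoly (n m : ℕ) : Polynomial ℤ :=
  ∑ k ∈ Finset.range (n * m + 1), Polynomial.C (domCount n m k : ℤ) * Polynomial.X ^ k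

/-! ### Auxiliary lemmas -/


lemma ncard_setOf_eq_card_filter {γ : Type*} [Fintype γ] (P : γ → Prop) [DecidablePred P] :
    Set.ncard {x | P x} = (univ.filter P).card := by
  have h : {x | P x} = ↑(univ.filter P) := by ext x; simp
  rw [h, Set.ncard_coe_finset]

def emptyRows {n m : ℕ} (S : Finset (Fin n × Fin m)) : Finset (Fin n) :=
  univ.filter (fun a => ∀ b, (a, b) ∉ S)

def emptyCols {n m : ℕ} (S : Finset (Fin n × Fin m)) : Finset (Fin m) :=
  univ.filter (fun b => ∀ a, (a, b) ∉ S)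

lemma mem_emptyRows {n m : ℕ} {S : Finset (Fin n × Fin m)} {a : Fin n} :
    a ∈ emptyRows S ↔ ∀ b, (a, b) ∉ S := by simp [emptyRows]

lemma mem_emptyCols {n m : ℕ} {S : Finset (Fin n × Fin m)} {b : Fin m} :
    b ∈ emptyCols S ↔ ∀ a, (a, b) ∉ S := by simp [emptyCols]

lemma isDomSet_iff {n m : ℕ} (S : Finset (Fin n × Fin m)) :
    IsDomSet n m S ↔ ∀ (a : Fin n) (b : Fin m),
      (∃ b', (a, b') ∈ S) ∨ (∃ a', (a', b) ∈ S) := by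
  constructor
  · intro h a b
    rcases h (a, b) with hv | ⟨u, hu, _, hadj⟩
    · exact Or.inl ⟨b, hv⟩
    · rcases hadj with h1 | h2
      · exact Or.inl ⟨u.2, by have h : (a, u.2) = u := Prod.ext h1.symm rfl; rwa [h]⟩
      · exact Or.inr ⟨u.1, by have h : (u.1, b) = u := Prod.ext rfl h2.symm; rwa [h]⟩
  · rintro h ⟨a, b⟩
    rcases h a b with ⟨b', hb⟩ | ⟨a', ha⟩
    · by_cases hbb : b' = b
      · subst hbb; exact Or.inl hb
      · exact Or.inr ⟨(a, b'), hb, by simp [rookGraph, Prod.ext_iff, hbb]⟩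
    · by_cases haa : a' = a
      · subst haa; exact Or.inl ha
      · exact Or.inr ⟨(a', b), ha, by simp [rookGraph, Prod.ext_iff, haa]⟩

lemma not_isDomSet_iff {n m : ℕ} (S : Finset (Fin n × Fin m)) :
    ¬ IsDomSet n m S ↔ (emptyRows S).Nonempty ∧ (emptyCols S).Nonempty := by
  rw [isDomSet_iff]
  push_neg
  constructor
  · rintro ⟨a, b, h1, h2⟩
    exact ⟨⟨a, mem_emptyRows.mpr h1⟩, ⟨b, mem_emptyCols.mpr h2⟩⟩
  · rintro ⟨⟨a, ha⟩, ⟨b, hb⟩⟩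
    exact ⟨a, b, mem_emptyRows.mp ha, mem_emptyCols.mp hb⟩

lemma fiber_iff {n m : ℕ} (S : Finset (Fin n × Fin m)) (R : Finset (Fin n))
    (C : Finset (Fin m)) :
    (emptyRows S = R ∧ emptyCols S = C) ↔
      (S ⊆ Rᶜ ×ˢ Cᶜ ∧ (∀ a ∈ Rᶜ, ∃ b ∈ Cᶜ, (a, b) ∈ S) ∧
        (∀ b ∈ Cᶜ, ∃ a ∈ Rᶜ, (a, b) ∈ S)) := by
  constructor
  · rintro ⟨hR, hC⟩
    have hsub : S ⊆ Rᶜ ×ˢ Cᶜ := by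
      rintro ⟨a, b⟩ hab
      rw [mem_product, mem_compl, mem_compl, ← hR, ← hC, mem_emptyRows, mem_emptyCols]
      push_neg
      exact ⟨⟨b, hab⟩, ⟨a, hab⟩⟩
    refine ⟨hsub, ?_, ?_⟩
    · intro a ha
      rw [mem_compl, ← hR, mem_emptyRows] at ha
      push_neg at ha
      obtain ⟨b, hb⟩ := ha
      exact ⟨b, ((mem_product).mp (hsub hb)).2, hb⟩
    · intro b hb
      rw [mem_compl, ← hC, mem_emptyCols] at hb
      push_neg at hb
      obtain ⟨a, ha⟩ := hb
      exact ⟨a, ((mem_product).mp (hsub ha)).1, ha⟩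
  · rintro ⟨hsub, h1, h2⟩
    constructor
    · ext a
      rw [mem_emptyRows]
      constructor
      · intro h
        by_contra ha
        obtain ⟨b, _, hb⟩ := h1 a (mem_compl.mpr ha)
        exact h b hb
      · intro ha b hb
        exact (mem_compl.mp ((mem_product.mp (hsub hb)).1)) ha
    · ext b
      rw [mem_emptyCols]
      constructor
      · intro h
        by_contra hb
        obtain ⟨a, _, ha⟩ := h2 b (mem_compl.mpr hb)
        exact h a ha
      · intro hb a ha
        exact (mem_compl.mp ((mem_product.mp (hsub ha)).2)) hb

lemma count_transfer {n m : ℕ} (A : Finset (Fin n)) (B : Finset (Fin m)) (k : ℕ) :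
    (univ.filter (fun S : Finset (Fin n × Fin m) => S.card = k ∧ S ⊆ A ×ˢ B ∧
      (∀ a ∈ A, ∃ b ∈ B, (a, b) ∈ S) ∧ (∀ b ∈ B, ∃ a ∈ A, (a, b) ∈ S))).card
    = ECount A.card B.card k := by
  classical
  rw [ECount, ncard_setOf_eq_card_filter]
  set eA : Fin A.card → Fin n := fun i => (A.equivFin.symm i : Fin n) with heA
  set eB : Fin B.card → Fin m := fun i => (B.equivFin.symm i : Fin m) with heB
  have heA_mem : ∀ i, eA i ∈ A := fun i => (A.equivFin.symm i).2
  have heB_mem : ∀ i, eB i ∈ B := fun i => (B.equivFin.symm i).2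
  have heA_inj : Function.Injective eA := fun i j h =>
    A.equivFin.symm.injective (Subtype.ext h)
  have heB_inj : Function.Injective eB := fun i j h =>
    B.equivFin.symm.injective (Subtype.ext h)
  have heA_surj : ∀ x ∈ A, ∃ i, eA i = x := fun x hx =>
    ⟨A.equivFin ⟨x, hx⟩, by simp [heA]⟩
  have heB_surj : ∀ x ∈ B, ∃ i, eB i = x := fun x hx =>
    ⟨B.equivFin ⟨x, hx⟩, by simp [heB]⟩
  set g : Fin A.card × Fin B.card ↪ Fin n × Fin m :=
    ⟨fun p => (eA p.1, eB p.2), by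
      rintro ⟨i, j⟩ ⟨i', j'⟩ h
      rw [Prod.ext_iff] at h
      exact Prod.ext (heA_inj h.1) (heB_inj h.2)⟩ with hg
  have hgval : ∀ (i : Fin A.card) (j : Fin B.card), g (i, j) = (eA i, eB j) :=
    fun i j => rfl
  have hmap : ∀ S : Finset (Fin n × Fin m), S ⊆ A ×ˢ B →
      (univ.filter (fun p => g p ∈ S)).map g = S := by
    intro S hsub
    ext y
    simp only [mem_map, mem_filter, mem_univ, true_and]
    constructor
    · rintro ⟨p, hp, rfl⟩; exact hp
    · intro hy
      have hy2 := hsub hy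
      rw [mem_product] at hy2
      obtain ⟨i, hi⟩ := heA_surj _ hy2.1
      obtain ⟨j, hj⟩ := heB_surj _ hy2.2
      have hgij : g (i, j) = y := by rw [hgval, hi, hj]
      exact ⟨(i, j), by rw [hgij]; exact hy, hgij⟩
  have hcard : ∀ S : Finset (Fin n × Fin m), S ⊆ A ×ˢ B →
      (univ.filter (fun p => g p ∈ S)).card = S.card := by
    intro S h
    conv_rhs => rw [← hmap S h]
    rw [card_map]
  refine Finset.card_bij' (fun S _ => univ.filter (fun p => g p ∈ S))
    (fun T _ => T.map g) ?_ ?_ ?_ ?_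
  · intro S hS
    rw [mem_filter] at hS
    obtain ⟨-, hk, hsub, h1, h2⟩ := hS
    rw [mem_filter]
    refine ⟨mem_univ _, by rw [hcard S hsub, hk], ?_, ?_⟩
    · intro r
      obtain ⟨b, hbB, hb⟩ := h1 (eA r) (heA_mem r)
      obtain ⟨c, hc⟩ := heB_surj b hbB
      refine ⟨c, ?_⟩
      rw [mem_filter]
      refine ⟨mem_univ _, ?_⟩
      rw [hgval, hc]
      exact hb
    · intro c
      obtain ⟨a, haA, ha⟩ := h2 (eB c) (heB_mem c)
      obtain ⟨r, hr⟩ := heA_surj a haA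
      refine ⟨r, ?_⟩
      rw [mem_filter]
      refine ⟨mem_univ _, ?_⟩
      rw [hgval, hr]
      exact ha
  · intro T hT
    rw [mem_filter] at hT
    obtain ⟨-, hk, h1, h2⟩ := hT
    rw [mem_filter]
    refine ⟨mem_univ _, by rw [card_map, hk], ?_, ?_, ?_⟩
    · intro y hy
      rw [mem_map] at hy
      obtain ⟨p, _, rfl⟩ := hy
      rw [hgval, mem_product]
      exact ⟨heA_mem _, heB_mem _⟩
    · intro a haA
      obtain ⟨i, rfl⟩ := heA_surj a haA
      obtain ⟨c, hc⟩ := h1 i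
      exact ⟨eB c, heB_mem c, mem_map_of_mem g hc⟩
    · intro b hbB
      obtain ⟨j, rfl⟩ := heB_surj b hbB
      obtain ⟨r, hr⟩ := h2 j
      exact ⟨eA r, heA_mem r, mem_map_of_mem g hr⟩
  · intro S hS
    rw [mem_filter] at hS
    exact hmap S hS.2.2.1
  · intro T _
    ext p
    simp [Finset.mem_map']

lemma sum_nonempty_card {γ : Type*} [Fintype γ] [DecidableEq γ] (g : ℕ → ℕ) :
    ∑ A ∈ univ.filter (fun A : Finset γ => A.Nonempty), g A.card
    = ∑ r ∈ Icc 1 (Fintype.card γ), (Fintype.card γ).choose r * g r := by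
  classical
  rw [sum_filter, ← Finset.powerset_univ, Finset.sum_powerset]
  rw [Finset.card_univ]
  have h1 : ∀ j ∈ Finset.range (Fintype.card γ + 1),
      (∑ A ∈ Finset.powersetCard j (univ : Finset γ),
        if A.Nonempty then g A.card else 0)
      = if 1 ≤ j then (Fintype.card γ).choose j * g j else 0 := by
    intro j _
    have h2 : ∀ A ∈ Finset.powersetCard j (univ : Finset γ),
        (if A.Nonempty then g A.card else 0) = if 1 ≤ j then g j else 0 := by
      intro A hA
      rw [Finset.mem_powersetCard_univ] at hA
      subst hA
      have hiff : A.Nonempty ↔ 1 ≤ A.card := Finset.card_pos.symm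
      simp only [hiff]
    rw [Finset.sum_congr rfl h2, Finset.sum_const, Finset.card_powersetCard,
      Finset.card_univ, smul_eq_mul]
    split <;> simp
  rw [Finset.sum_congr rfl h1, ← Finset.sum_filter]
  congr 1
  ext j
  simp only [Finset.mem_filter, Finset.mem_range, Finset.mem_Icc]
  omega

set_option maxHeartbeats 1000000 in
/-- Theorem 1: recursion expressing the dominating-set counts via `ECount`. -/
theorem rook_dom_count_eq (n m k : ℕ) (hn : 1 ≤ n) (hm : 1 ≤ m) (hk : k ≤ n * m) :
    (domCount n m k : ℤ) =
      ((n * m).choose k : ℤ) -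
        ∑ r ∈ Finset.Icc 1 n, ∑ c ∈ Finset.Icc 1 m,
          (n.choose r : ℤ) * (m.choose c : ℤ) * (ECount (n - r) (m - c) k : ℤ) := by
  classical
  have hdom : domCount n m k =
      (univ.filter (fun S : Finset (Fin n × Fin m) => S.card = k ∧ IsDomSet n m S)).card :=
    ncard_setOf_eq_card_filter _
  set N := univ.filter (fun S : Finset (Fin n × Fin m) => S.card = k ∧ ¬ IsDomSet n m S)
    with hNdef
  -- total count
  have htot : domCount n m k + N.card = (n * m).choose k := by
    rw [hdom, hNdef]
    have e1 : univ.filter (fun S : Finset (Fin n × Fin m) => S.card = k ∧ IsDomSet n m S)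
        = (univ.filter (fun S : Finset (Fin n × Fin m) => S.card = k)).filter
            (fun S => IsDomSet n m S) := by
      rw [Finset.filter_filter]
    have e2 : univ.filter (fun S : Finset (Fin n × Fin m) => S.card = k ∧ ¬ IsDomSet n m S)
        = (univ.filter (fun S : Finset (Fin n × Fin m) => S.card = k)).filter
            (fun S => ¬ IsDomSet n m S) := by
      rw [Finset.filter_filter]
    rw [e1, e2, Finset.card_filter_add_card_filter_not]
    have e3 : univ.filter (fun S : Finset (Fin n × Fin m) => S.card = k)
        = Finset.powersetCard k (univ : Finset (Fin n × Fin m)) := by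
      ext S; simp [Finset.mem_powersetCard_univ]
    rw [e3, Finset.card_powersetCard, Finset.card_univ]
    simp
  -- fibering the non-dominating sets
  have hfib : ∀ S ∈ N, (emptyRows S, emptyCols S) ∈
      (univ.filter (fun R : Finset (Fin n) => R.Nonempty)) ×ˢ
      (univ.filter (fun C : Finset (Fin m) => C.Nonempty)) := by
    intro S hS
    rw [hNdef, mem_filter] at hS
    have := (not_isDomSet_iff S).mp hS.2.2
    rw [mem_product, mem_filter, mem_filter]
    exact ⟨⟨mem_univ _, this.1⟩, ⟨mem_univ _, this.2⟩⟩
  have hN : N.card = ∑ p ∈ (univ.filter (fun R : Finset (Fin n) => R.Nonempty)) ×ˢ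
      (univ.filter (fun C : Finset (Fin m) => C.Nonempty)),
      (N.filter (fun S => (emptyRows S, emptyCols S) = p)).card :=
    Finset.card_eq_sum_card_fiberwise hfib
  have hfibcard : ∀ p ∈ (univ.filter (fun R : Finset (Fin n) => R.Nonempty)) ×ˢ
      (univ.filter (fun C : Finset (Fin m) => C.Nonempty)),
      (N.filter (fun S => (emptyRows S, emptyCols S) = p)).card
        = ECount (n - p.1.card) (m - p.2.card) k := by
    rintro ⟨R, C⟩ hp
    rw [mem_product, mem_filter, mem_filter] at hp
    obtain ⟨⟨-, hR⟩, ⟨-, hC⟩⟩ := hp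
    have heq : N.filter (fun S => (emptyRows S, emptyCols S) = (R, C))
        = univ.filter (fun S : Finset (Fin n × Fin m) => S.card = k ∧ S ⊆ Rᶜ ×ˢ Cᶜ ∧
            (∀ a ∈ Rᶜ, ∃ b ∈ Cᶜ, (a, b) ∈ S) ∧ (∀ b ∈ Cᶜ, ∃ a ∈ Rᶜ, (a, b) ∈ S)) := by
      ext S
      rw [mem_filter, hNdef, mem_filter, mem_filter]
      simp only [mem_univ, true_and, Prod.mk.injEq]
      constructor
      · rintro ⟨⟨hk', _⟩, hR', hC'⟩
        obtain ⟨hsub, h1, h2⟩ := (fiber_iff S R C).mp ⟨hR', hC'⟩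
        exact ⟨hk', hsub, h1, h2⟩
      · rintro ⟨hk', hsub, h1, h2⟩
        have hf := (fiber_iff S R C).mpr ⟨hsub, h1, h2⟩
        refine ⟨⟨hk', ?_⟩, hf.1, hf.2⟩
        rw [not_isDomSet_iff, hf.1, hf.2]
        exact ⟨hR, hC⟩
    rw [heq, count_transfer, Finset.card_compl, Finset.card_compl]
    simp
  have hNval : N.card = ∑ r ∈ Finset.Icc 1 n, n.choose r *
      ∑ c ∈ Finset.Icc 1 m, m.choose c * ECount (n - r) (m - c) k := by
    rw [hN]
    have inner : ∀ R : Finset (Fin n),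
        ∑ C ∈ univ.filter (fun C : Finset (Fin m) => C.Nonempty),
          ECount (n - R.card) (m - C.card) k
        = ∑ c ∈ Finset.Icc 1 m, m.choose c * ECount (n - R.card) (m - c) k := by
      intro R
      have := sum_nonempty_card (γ := Fin m) (fun c => ECount (n - R.card) (m - c) k)
      simpa using this
    rw [Finset.sum_congr rfl hfibcard, Finset.sum_product]
    have step3 : ∀ R ∈ univ.filter (fun R : Finset (Fin n) => R.Nonempty),
        ∑ C ∈ univ.filter (fun C : Finset (Fin m) => C.Nonempty),
          ECount (n - (R, C).1.card) (m - (R, C).2.card) k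
        = ∑ c ∈ Finset.Icc 1 m, m.choose c * ECount (n - R.card) (m - c) k :=
      fun R _ => inner R
    rw [Finset.sum_congr rfl step3]
    have := sum_nonempty_card (γ := Fin n)
      (fun r => ∑ c ∈ Finset.Icc 1 m, m.choose c * ECount (n - r) (m - c) k)
    simpa using this
  have hsum : (N.card : ℤ) = ∑ r ∈ Finset.Icc 1 n, ∑ c ∈ Finset.Icc 1 m,
      (n.choose r : ℤ) * (m.choose c : ℤ) * (ECount (n - r) (m - c) k : ℤ) := by
    rw [hNval]
    push_cast
    refine Finset.sum_congr rfl fun r _ => ?_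
    rw [Finset.mul_sum]
    refine Finset.sum_congr rfl fun c _ => ?_
    ring
  rw [eq_sub_iff_add_eq, ← hsum]
  exact_mod_cast congrArg (Nat.cast : ℕ → ℤ) htot
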